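/- Let d be an odd prime, n ≥ 1, and D := dⁿ. If d = 3, let T̃₀ := span{((1,2,0);(1,2,0)), ((0,0,0);(1,1,1)), ((1,1,1);(0,0,0))} and T̃₁ := span{((1,2,0);(2,1,0)), ((0,0,0);(1,1,1)), ((1,1,1);(0,0,0))} in 𝔽₃⁶; then R_n(T̃_i)† = R_n(T̃_i) and R_n(T̃_i)·R_n(T̃_j) = 3ⁿ·R_n(T̃_{i+j mod 2}) for all i, j ∈ {0,1}. If d ≡ 1 (mod 3), let ξ ∈ 𝔽_d have multiplicative order 3, g₀ := (1,ξ,ξ²), g₁ := (1,ξ²,ξ), and T̃_{ij} := span{(g_i;0), (0;g_j), (1₃;1₃)}; then R_n(T̃_{ij})† = R_n(T̃_{ji}) and R_n(T̃_{ij})·R_n(T̃_{kl}) = D^{1−|j−k|}·R_n(T̃_{il}) for all i, j, k, l ∈ {0,1}. -/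
import Mathlib


open scoped Classical

noncomputable section

/-- `𝔽_d³` as triples over `ZMod d`. -/
abbrev F3 (d : ℕ) : Type := Fin 3 → ZMod d

/-- `𝔽_d⁶`, whose elements are written as pairs `(x; y)` with `x, y ∈ 𝔽_d³`. -/
abbrev V6 (d : ℕ) : Type := (Fin 3 → ZMod d) × (Fin 3 → ZMod d)

/-- The dot product `x·y = ∑ i, x i * y i` on `𝔽_d³`. -/
def dot3 {d : ℕ} (x y : F3 d) : ZMod d := ∑ i, x i * y i

/-- The all-ones vector `1₃`. -/
def one3 (d : ℕ) : F3 d := fun _ => 1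

/-- `R_n(T)`: the complex matrix indexed by `(𝔽_d³)ⁿ` with `((X₁,…,Xₙ),(Y₁,…,Yₙ))`
entry `1` if `(Xᵢ; Yᵢ) ∈ T` for all `i`, and `0` otherwise. -/
def Rn (d n : ℕ) (T : Submodule (ZMod d) (V6 d)) :
    Matrix (Fin n → F3 d) (Fin n → F3 d) ℂ :=
  Matrix.of fun X Y => if ∀ i, (X i, Y i) ∈ T then 1 else 0

/-- The two stochastic Lagrangian subspaces `T̃₀, T̃₁` (for `d = 3`). -/
def Td3 (d : ℕ) : Fin 2 → Submodule (ZMod d) (V6 d) := fun i =>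
  if i = 0 then
    Submodule.span (ZMod d)
      {(![1, 2, 0], ![1, 2, 0]), (![0, 0, 0], ![1, 1, 1]), (![1, 1, 1], ![0, 0, 0])}
  else
    Submodule.span (ZMod d)
      {(![1, 2, 0], ![2, 1, 0]), (![0, 0, 0], ![1, 1, 1]), (![1, 1, 1], ![0, 0, 0])}

/-- The four stochastic Lagrangian subspaces
`T̃_{ij} = span{(g_i; 0), (0; g_j), (1₃; 1₃)}` (for `d ≡ 1 (mod 3)`),
where `g₀ = (1, ξ, ξ²)` and `g₁ = (1, ξ², ξ)`. -/
def Td1 (d : ℕ) (ξ : ZMod d) : Fin 2 → Fin 2 → Submodule (ZMod d) (V6 d) := fun i j =>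
  Submodule.span (ZMod d)
    {((if i = 0 then ![1, ξ, ξ ^ 2] else ![1, ξ ^ 2, ξ]), (0 : F3 d)),
     ((0 : F3 d), (if j = 0 then ![1, ξ, ξ ^ 2] else ![1, ξ ^ 2, ξ])),
     (one3 d, one3 d)}

lemma mem_span_triple {R M : Type*} [CommRing R] [AddCommGroup M] [Module R M]
    {u v w x : M} :
    x ∈ Submodule.span R ({u, v, w} : Set M) ↔
      ∃ a b c : R, x = a • u + (b • v + c • w) := by
  rw [Submodule.mem_span_insert]
  simp only [Submodule.mem_span_pair]
  constructor
  · rintro ⟨a, z, ⟨b, c, rfl⟩, rfl⟩; exact ⟨a, b, c, rfl⟩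
  · rintro ⟨a, b, c, rfl⟩; exact ⟨a, _, ⟨b, c, rfl⟩, rfl⟩

lemma Rn_conjT {d n : ℕ} {T T' : Submodule (ZMod d) (V6 d)}
    (h : ∀ x y : F3 d, (x, y) ∈ T ↔ (y, x) ∈ T') :
    (Rn d n T).conjTranspose = Rn d n T' := by
  ext X Y
  simp only [Matrix.conjTranspose_apply, Rn, Matrix.of_apply, apply_ite (star : ℂ → ℂ),
    star_one, star_zero]
  exact if_congr (forall_congr' fun i => h _ _) rfl rfl

lemma Rn_mul {d n : ℕ} [NeZero d] {T T' T'' : Submodule (ZMod d) (V6 d)} (c : ℕ)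
    (h : ∀ x z : F3 d,
      (Finset.univ.filter fun y : F3 d => (x, y) ∈ T ∧ (y, z) ∈ T').card
        = if (x, z) ∈ T'' then c else 0) :
    Rn d n T * Rn d n T' = ((c : ℂ) ^ n) • Rn d n T'' := by
  ext X Z
  simp only [Matrix.mul_apply, Rn, Matrix.of_apply, Matrix.smul_apply, smul_eq_mul]
  have step1 : ∀ Y : Fin n → F3 d,
      (if ∀ i, (X i, Y i) ∈ T then (1:ℂ) else 0) * (if ∀ i, (Y i, Z i) ∈ T' then 1 else 0)
      = ∏ i, (if (X i, Y i) ∈ T ∧ (Y i, Z i) ∈ T' then (1:ℂ) else 0) := by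
    intro Y
    simp only [Finset.prod_boole, Finset.mem_univ, forall_true_left, forall_and]
    split_ifs with h1 h2 <;> simp_all
  simp only [step1]
  rw [← Fintype.prod_sum (fun i y => if (X i, y) ∈ T ∧ (y, Z i) ∈ T' then (1:ℂ) else 0)]
  have step2 : ∀ i, (∑ y : F3 d, if (X i, y) ∈ T ∧ (y, Z i) ∈ T' then (1:ℂ) else 0)
      = if (X i, Z i) ∈ T'' then (c : ℂ) else 0 := by
    intro i
    rw [Finset.sum_boole, h (X i) (Z i)]
    split <;> simp
  simp only [step2]
  have step3 : ∀ p : Prop, ∀ _ : Decidable p,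
      (if p then (c:ℂ) else 0) = (c:ℂ) * (if p then 1 else 0) := by
    intro p _; split <;> simp
  simp only [step3]
  rw [Finset.prod_mul_distrib, Finset.prod_const, Finset.prod_boole]
  simp [Finset.card_univ]


/-- decidable characterization of membership in `Td3 3 i` -/
def P3 (i : Fin 2) (x y : F3 3) : Prop :=
  dot3 x (one3 3) = 0 ∧ dot3 y (one3 3) = 0 ∧
    dot3 x ![1, 2, 0] = (if i = 0 then 1 else 2) * dot3 y ![1, 2, 0]

instance (i : Fin 2) (x y : F3 3) : Decidable (P3 i x y) := by unfold P3; infer_instance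

set_option maxHeartbeats 4000000 in
lemma mem_Td3_iff (i : Fin 2) (x y : F3 3) : (x, y) ∈ Td3 3 i ↔ P3 i x y := by
  fin_cases i <;>
  · show (x, y) ∈ Submodule.span (ZMod 3) _ ↔ _
    rw [mem_span_triple]
    revert x y
    decide

lemma P3_symm (i : Fin 2) (x y : F3 3) : P3 i x y ↔ P3 i y x := by
  revert x y; fin_cases i <;> decide

set_option maxHeartbeats 4000000 in
lemma P3_count (i j : Fin 2) (x z : F3 3) :
    (Finset.univ.filter fun y : F3 3 => P3 i x y ∧ P3 j y z).card
      = if P3 (i + j) x z then 3 else 0 := by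
  revert x z; fin_cases i <;> fin_cases j <;> decide


section eta
variable {d : ℕ} (η t : ZMod d)

/-- key decomposition: if `x · (1,η,η²) = 0` then `x` is a combination of `(1,η,η²)` and `1`. -/
lemma decomp (hs : 1 + η + η ^ 2 = 0) (ht : (3 : ZMod d) * t = 1) (x : F3 d)
    (h0 : dot3 x ![1, η, η ^ 2] = 0) :
    x = (t * dot3 x ![1, η ^ 2, (η ^ 2) ^ 2]) • (![1, η, η ^ 2] : F3 d)
        + (t * dot3 x (one3 d)) • one3 d := by
  have h0' : x 0 + x 1 * η + x 2 * η ^ 2 = 0 := by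
    simpa [dot3, Fin.sum_univ_three] using h0
  funext k
  fin_cases k
  · show x 0 = _
    simp [dot3, Fin.sum_univ_three, one3]
    linear_combination (1 - 2*t) * h0'
      + (-(x 2) + 2*(x 2)*t + (x 2)*t*η - (x 2)*t*η^2 - (x 1)*t) * hs
      + (-(x 2) - (x 2)*η + (x 1)*η) * ht
  · show x 1 = _
    simp [dot3, Fin.sum_univ_three, one3]
    linear_combination (-t - t*η) * h0'
      + (-(x 2)*t + (x 2)*t*η + (x 2)*t*η^2 - (x 2)*t*η^3 + 2*(x 1)*t - (x 1)*t*η) * hs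
      + (-(x 1)) * ht
  · show x 2 = _
    simp [dot3, Fin.sum_univ_three, one3]
    linear_combination (-t - t*η^2) * h0'
      + (2*(x 2)*t - 2*(x 2)*t*η + (x 2)*t*η^2 + (x 2)*t*η^3 - (x 2)*t*η^4 - (x 1)*t
          + 2*(x 1)*t*η - (x 1)*t*η^2) * hs
      + (-(x 2)) * ht

lemma dot_comb_self (hs : 1 + η + η ^ 2 = 0) (a c : ZMod d) :
    dot3 (a • (![1, η, η ^ 2] : F3 d) + c • one3 d) ![1, η, η ^ 2] = 0 := by
  have hx3 : η ^ 3 = 1 := by linear_combination (η - 1) * hs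
  simp only [dot3, Fin.sum_univ_three, one3, Pi.add_apply, Pi.smul_apply, smul_eq_mul,
    Matrix.cons_val_zero, Matrix.cons_val_one, Matrix.head_cons, Matrix.cons_val_two,
    Matrix.tail_cons]
  linear_combination a * η * hx3 + (a + c) * hs

lemma dot_comb_one (hs : 1 + η + η ^ 2 = 0) (a c : ZMod d) :
    dot3 (a • (![1, η, η ^ 2] : F3 d) + c • one3 d) (one3 d) = 3 * c := by
  simp only [dot3, Fin.sum_univ_three, one3, Pi.add_apply, Pi.smul_apply, smul_eq_mul,
    Matrix.cons_val_zero, Matrix.cons_val_one, Matrix.head_cons, Matrix.cons_val_two,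
    Matrix.tail_cons]
  linear_combination a * hs

end eta

/-- membership characterization for span{(Gη,0),(0,Gθ),(1,1)} -/
lemma mem_span3_iff {d : ℕ} (η θ t : ZMod d)
    (hsη : 1 + η + η ^ 2 = 0) (hsθ : 1 + θ + θ ^ 2 = 0) (ht : (3 : ZMod d) * t = 1)
    (x y : F3 d) :
    (x, y) ∈ Submodule.span (ZMod d)
        ({((![1, η, η ^ 2] : F3 d), (0 : F3 d)), ((0 : F3 d), (![1, θ, θ ^ 2] : F3 d)),
          (one3 d, one3 d)} : Set (V6 d)) ↔
      (dot3 x ![1, η, η ^ 2] = 0 ∧ dot3 y ![1, θ, θ ^ 2] = 0 ∧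
        dot3 x (one3 d) = dot3 y (one3 d)) := by
  rw [mem_span_triple]
  constructor
  · rintro ⟨a, b, c, hxy⟩
    rw [Prod.ext_iff] at hxy
    obtain ⟨hx, hy⟩ := hxy
    simp only [Prod.fst_add, Prod.snd_add, Prod.smul_mk, Prod.fst, Prod.snd, smul_zero,
      zero_add, add_zero] at hx hy
    rw [hx, hy]
    refine ⟨dot_comb_self η hsη a c, dot_comb_self θ hsθ b c, ?_⟩
    rw [dot_comb_one η hsη a c, dot_comb_one θ hsθ b c]
  · rintro ⟨h1, h2, h3⟩
    refine ⟨t * dot3 x ![1, η ^ 2, (η ^ 2) ^ 2], t * dot3 y ![1, θ ^ 2, (θ ^ 2) ^ 2],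
      t * dot3 x (one3 d), ?_⟩
    rw [Prod.ext_iff]
    constructor
    · simp only [Prod.fst_add, Prod.smul_mk, Prod.fst, smul_zero, zero_add, add_zero]
      exact decomp η t hsη ht x h1
    · simp only [Prod.snd_add, Prod.smul_mk, Prod.snd, smul_zero, zero_add, add_zero]
      rw [h3]
      exact decomp θ t hsθ ht y h2

lemma dot_smul_one (η s : ZMod d) (hs : 1 + η + η ^ 2 = 0) :
    dot3 (s • one3 d) ![1, η, η ^ 2] = 0 := by
  simp only [dot3, Fin.sum_univ_three, one3, Pi.smul_apply, smul_eq_mul,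
    Matrix.cons_val_zero, Matrix.cons_val_one, Matrix.head_cons, Matrix.cons_val_two,
    Matrix.tail_cons]
  linear_combination s * hs

lemma dot_smul_one' (s : ZMod d) :
    dot3 (s • one3 d) (one3 d) = 3 * s := by
  simp only [dot3, Fin.sum_univ_three, one3, Pi.smul_apply, smul_eq_mul,
    Matrix.cons_val_zero]
  ring

/-- counting lemma: number of `y` compatible with `x` via `(η,θ)` and with `z` via `(κ,λ)` -/
lemma count3 {d : ℕ} [NeZero d] (η θ κ lam t : ZMod d)
    (hsη : 1 + η + η ^ 2 = 0) (hsθ : 1 + θ + θ ^ 2 = 0) (hsκ : 1 + κ + κ ^ 2 = 0)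
    (hslam : 1 + lam + lam ^ 2 = 0) (ht : (3 : ZMod d) * t = 1)
    (hjk : θ = κ ∨ (![1, κ, κ ^ 2] : F3 d) = ![1, θ ^ 2, (θ ^ 2) ^ 2])
    (x z : F3 d) :
    (Finset.univ.filter fun y : F3 d =>
        (dot3 x ![1, η, η ^ 2] = 0 ∧ dot3 y ![1, θ, θ ^ 2] = 0 ∧
          dot3 x (one3 d) = dot3 y (one3 d)) ∧
        (dot3 y ![1, κ, κ ^ 2] = 0 ∧ dot3 z ![1, lam, lam ^ 2] = 0 ∧
          dot3 y (one3 d) = dot3 z (one3 d))).card =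
      if (dot3 x ![1, η, η ^ 2] = 0 ∧ dot3 z ![1, lam, lam ^ 2] = 0 ∧
            dot3 x (one3 d) = dot3 z (one3 d))
        then (if θ = κ then d else 1) else 0 := by
  by_cases hxz : dot3 x ![1, η, η ^ 2] = 0 ∧ dot3 z ![1, lam, lam ^ 2] = 0 ∧
      dot3 x (one3 d) = dot3 z (one3 d)
  · rw [if_pos hxz]
    obtain ⟨hx0, hz0, hxz1⟩ := hxz
    have hfil : (Finset.univ.filter fun y : F3 d =>
        (dot3 x ![1, η, η ^ 2] = 0 ∧ dot3 y ![1, θ, θ ^ 2] = 0 ∧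
          dot3 x (one3 d) = dot3 y (one3 d)) ∧
        (dot3 y ![1, κ, κ ^ 2] = 0 ∧ dot3 z ![1, lam, lam ^ 2] = 0 ∧
          dot3 y (one3 d) = dot3 z (one3 d))) =
        Finset.univ.filter fun y : F3 d =>
          dot3 y ![1, θ, θ ^ 2] = 0 ∧ dot3 y ![1, κ, κ ^ 2] = 0 ∧
            dot3 y (one3 d) = dot3 x (one3 d) := by
      apply Finset.filter_congr
      intro y _
      constructor
      · rintro ⟨⟨-, h2, h3⟩, ⟨h4, -, -⟩⟩; exact ⟨h2, h4, h3.symm⟩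
      · rintro ⟨h2, h4, h3⟩; exact ⟨⟨hx0, h2, h3.symm⟩, ⟨h4, hz0, h3.trans hxz1⟩⟩
    rw [hfil]
    rcases eq_or_ne θ κ with hθκ | hθκ
    · rw [if_pos hθκ]
      subst hθκ
      have himg : (Finset.univ.filter fun y : F3 d =>
          dot3 y ![1, θ, θ ^ 2] = 0 ∧ dot3 y ![1, θ, θ ^ 2] = 0 ∧
            dot3 y (one3 d) = dot3 x (one3 d)) =
          Finset.image
            (fun a : ZMod d => a • (![1, θ, θ ^ 2] : F3 d)
              + (t * dot3 x (one3 d)) • one3 d) Finset.univ := by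
        ext y
        simp only [Finset.mem_filter, Finset.mem_univ, true_and, Finset.mem_image]
        constructor
        · rintro ⟨h1, -, h3⟩
          refine ⟨t * dot3 y ![1, θ ^ 2, (θ ^ 2) ^ 2], ?_⟩
          rw [← h3]
          exact (decomp θ t hsθ ht y h1).symm
        · rintro ⟨a, rfl⟩
          refine ⟨dot_comb_self θ hsθ _ _, dot_comb_self θ hsθ _ _, ?_⟩
          rw [dot_comb_one θ hsθ]
          linear_combination dot3 x (one3 d) * ht
      rw [himg, Finset.card_image_of_injective _ ?inj, Finset.card_univ, ZMod.card]
      case inj =>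
        intro a b hab
        have := congrFun hab 0
        simpa using this
    · rw [if_neg hθκ]
      have hGκ : (![1, κ, κ ^ 2] : F3 d) = ![1, θ ^ 2, (θ ^ 2) ^ 2] := by
        rcases hjk with h | h
        · exact absurd h hθκ
        · exact h
      have hsing : (Finset.univ.filter fun y : F3 d =>
          dot3 y ![1, θ, θ ^ 2] = 0 ∧ dot3 y ![1, κ, κ ^ 2] = 0 ∧
            dot3 y (one3 d) = dot3 x (one3 d)) =
          {(t * dot3 x (one3 d)) • one3 d} := by
        ext y
        simp only [Finset.mem_filter, Finset.mem_univ, true_and, Finset.mem_singleton]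
        constructor
        · rintro ⟨h1, h2, h3⟩
          have hdec := decomp θ t hsθ ht y h1
          rw [← hGκ] at hdec
          rw [h2, mul_zero, zero_smul, zero_add, h3] at hdec
          exact hdec
        · rintro rfl
          refine ⟨dot_smul_one _ _ hsθ, dot_smul_one _ _ hsκ, ?_⟩
          rw [dot_smul_one']
          linear_combination dot3 x (one3 d) * ht
      rw [hsing, Finset.card_singleton]
  · rw [if_neg hxz]
    rw [Finset.card_eq_zero, Finset.filter_eq_empty_iff]
    rintro y - ⟨⟨h1, -, h3⟩, ⟨-, h5, h6⟩⟩
    exact hxz ⟨h1, h5, h3.trans h6⟩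


-- main theorem glue (to be appended after all helpers)
theorem stmt13 (d : ℕ) [NeZero d] (hd : d.Prime) (hodd : Odd d) (n : ℕ) (hn : 1 ≤ n) :
    (d = 3 → ∀ i j : Fin 2,
      (Rn d n (Td3 d i)).conjTranspose = Rn d n (Td3 d i) ∧
      Rn d n (Td3 d i) * Rn d n (Td3 d j) = ((3 : ℂ) ^ n) • Rn d n (Td3 d (i + j))) ∧
    (d % 3 = 1 → ∀ ξ : ZMod d, orderOf ξ = 3 → ∀ i j k l : Fin 2,
      (Rn d n (Td1 d ξ i j)).conjTranspose = Rn d n (Td1 d ξ j i) ∧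
      Rn d n (Td1 d ξ i j) * Rn d n (Td1 d ξ k l) =
        (if j = k then ((d : ℂ) ^ n) else 1) • Rn d n (Td1 d ξ i l)) := by
  constructor
  · -- d = 3 case
    rintro rfl i j
    constructor
    · exact Rn_conjT fun x y =>
        (mem_Td3_iff i x y).trans ((P3_symm i x y).trans (mem_Td3_iff i y x).symm)
    · have hcount : ∀ x z : F3 3,
          (Finset.univ.filter fun y : F3 3 =>
            (x, y) ∈ Td3 3 i ∧ (y, z) ∈ Td3 3 j).card
            = if (x, z) ∈ Td3 3 (i + j) then 3 else 0 := by
        intro x z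
        simp only [mem_Td3_iff]
        exact P3_count i j x z
      have := Rn_mul (n := n) 3 hcount
      simpa using this
  · -- d ≡ 1 (mod 3) case
    intro hmod ξ hξ
    haveI := Fact.mk hd
    have hx3 : ξ ^ 3 = 1 := by
      have := pow_orderOf_eq_one ξ; rwa [hξ] at this
    have hx1 : ξ ≠ 1 := by
      intro h; rw [h, orderOf_one] at hξ; omega
    have hs : 1 + ξ + ξ ^ 2 = 0 := by
      have hfac : (ξ - 1) * (1 + ξ + ξ ^ 2) = 0 := by linear_combination hx3
      rcases mul_eq_zero.1 hfac with h | h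
      · exact absurd (sub_eq_zero.1 h) hx1
      · exact h
    have h3ne : (3 : ZMod d) ≠ 0 := by
      intro h
      have hdvd : d ∣ 3 := by
        have := (ZMod.natCast_eq_zero_iff 3 d).1 (by exact_mod_cast h)
        exact this
      have hd3 : d = 3 := (Nat.prime_dvd_prime_iff_eq hd Nat.prime_three).1 hdvd
      rw [hd3] at hmod; omega
    set t : ZMod d := (3 : ZMod d)⁻¹ with htdef
    have ht : (3 : ZMod d) * t = 1 := mul_inv_cancel₀ h3ne
    set ηf : Fin 2 → ZMod d := fun i => if i = 0 then ξ else ξ ^ 2 with hηf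
    have hsf : ∀ i, 1 + ηf i + ηf i ^ 2 = 0 := by
      intro i
      fin_cases i
      · simpa [hηf] using hs
      · show 1 + ξ ^ 2 + (ξ ^ 2) ^ 2 = 0
        linear_combination ξ * hx3 + hs
    have hmem : ∀ (i j : Fin 2) (x y : F3 d), (x, y) ∈ Td1 d ξ i j ↔
        (dot3 x ![1, ηf i, ηf i ^ 2] = 0 ∧ dot3 y ![1, ηf j, ηf j ^ 2] = 0 ∧
          dot3 x (one3 d) = dot3 y (one3 d)) := by
      have hgv : ∀ i : Fin 2,
          (if i = 0 then ![1, ξ, ξ ^ 2] else ![1, ξ ^ 2, ξ]) = (![1, ηf i, ηf i ^ 2] : F3 d) := by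
        intro i
        fin_cases i
        · rfl
        · show (![1, ξ ^ 2, ξ] : F3 d) = ![1, ξ ^ 2, (ξ ^ 2) ^ 2]
          funext m
          fin_cases m
          · rfl
          · rfl
          · show ξ = (ξ ^ 2) ^ 2
            linear_combination (-ξ) * hx3
      intro i j x y
      have hTd : Td1 d ξ i j = Submodule.span (ZMod d)
          ({((![1, ηf i, ηf i ^ 2] : F3 d), (0 : F3 d)),
            ((0 : F3 d), (![1, ηf j, ηf j ^ 2] : F3 d)), (one3 d, one3 d)} : Set (V6 d)) := by
        unfold Td1
        rw [hgv i, hgv j]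
      rw [hTd, mem_span3_iff (ηf i) (ηf j) t (hsf i) (hsf j) ht]
    have hinj : ∀ j k : Fin 2, ηf j = ηf k → j = k := by
      intro j k h
      by_contra hne
      have hx2 : ξ = ξ ^ 2 := by
        fin_cases j <;> fin_cases k <;> first
          | exact absurd rfl hne
          | (simp only [hηf] at h; simpa using h)
          | (simp only [hηf] at h; simpa using h.symm)
      have hsq : ξ ^ 2 = 1 := by linear_combination hx3 + ξ * hx2
      exact hx1 (hx2.trans hsq)
    intro i j k l
    constructor
    · refine Rn_conjT fun x y => ?_
      rw [hmem i j x y, hmem j i y x]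
      constructor
      · rintro ⟨h1, h2, h3⟩; exact ⟨h2, h1, h3.symm⟩
      · rintro ⟨h1, h2, h3⟩; exact ⟨h2, h1, h3.symm⟩
    · have hjk : ηf j = ηf k ∨
          (![1, ηf k, ηf k ^ 2] : F3 d) = ![1, ηf j ^ 2, (ηf j ^ 2) ^ 2] := by
        rcases eq_or_ne j k with h | h
        · exact Or.inl (by rw [h])
        · right
          fin_cases j <;> fin_cases k <;> first
            | exact absurd rfl h
            | rfl
            | · show (![1, ξ, ξ ^ 2] : F3 d) = ![1, (ξ ^ 2) ^ 2, ((ξ ^ 2) ^ 2) ^ 2]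
                funext m
                fin_cases m
                · rfl
                · show ξ = (ξ ^ 2) ^ 2
                  linear_combination (-ξ) * hx3
                · show ξ ^ 2 = ((ξ ^ 2) ^ 2) ^ 2
                  linear_combination (-(ξ ^ 2) * (ξ ^ 3 + 1)) * hx3
      have hcount : ∀ x z : F3 d,
          (Finset.univ.filter fun y : F3 d =>
            (x, y) ∈ Td1 d ξ i j ∧ (y, z) ∈ Td1 d ξ k l).card
            = if (x, z) ∈ Td1 d ξ i l then (if j = k then d else 1) else 0 := by
        intro x z
        have hiff : (ηf j = ηf k) = (j = k) :=
          propext ⟨hinj j k, fun h => by rw [h]⟩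
        have := count3 (ηf i) (ηf j) (ηf k) (ηf l) t
          (hsf i) (hsf j) (hsf k) (hsf l) ht hjk x z
        simp only [hiff] at this
        simp only [hmem]
        exact this
      have := Rn_mul (n := n) (if j = k then d else 1) hcount
      rw [this]
      congr 1
      split_ifs <;> simp
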